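/- For j ∈ ℕ define η_j := (−1)^j·(binomial(2j, j))/4^j (the generalized binomial coefficient binom(−1/2, j)) and a_j := 2j + 1/2. Then ∫_0^∞ z·(1/√(πz))·(Σ_{j=0}^∞ η_j·a_j·exp(−(a_j²/2)·z)) dz = √2·Σ_{j=0}^∞ η_j·a_j^{−2}, where the integral is finite and the series on the right converges absolutely. -/

import Mathlib

open MeasureTheory Real

/-- `η_j = binom(−1/2, j) = (−1)^j (2j choose j) / 4^j`. -/
noncomputable def eta (j : ℕ) : ℝ := (-1) ^ j * (Nat.choose (2 * j) j) / 4 ^ j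

/-- `a_j = 2j + 1/2`. -/
noncomputable def aC (j : ℕ) : ℝ := 2 * j + 1 / 2

section Aux
open ENNReal NNReal Filter

lemma integrable_tsum_aux {α : Type*} [MeasurableSpace α] {μ : Measure α} {f : ℕ → α → ℝ}
    (hf : ∀ i, Integrable (f i) μ) (hsum : Summable fun i => ∫ a, ‖f i a‖ ∂μ) :
    Integrable (fun a => ∑' i, f i a) μ := by
  have hmeas : ∀ i, AEMeasurable (fun x => (‖f i x‖₊ : ℝ≥0∞)) μ :=
    fun i => (hf i).aestronglyMeasurable.enorm
  have hlt : ∑' i, ∫⁻ a, ‖f i a‖₊ ∂μ ≠ ∞ := by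
    have h1 : ∀ i, ∫⁻ a, ‖f i a‖₊ ∂μ = ENNReal.ofReal (∫ a, ‖f i a‖ ∂μ) := fun i =>
      (ofReal_integral_norm_eq_lintegral_enorm (hf i)).symm
    simp_rw [h1]
    rw [← ENNReal.ofReal_tsum_of_nonneg (fun i => integral_nonneg (fun a => norm_nonneg _)) hsum]
    exact ENNReal.ofReal_ne_top
  have hae : ∀ᵐ a ∂μ, Summable fun n => f n a := by
    have hlt' := hlt
    rw [← lintegral_tsum hmeas] at hlt'
    filter_upwards [ae_lt_top' (AEMeasurable.ennreal_tsum hmeas) hlt'] with a ha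
    have hs : Summable fun n => (‖f n a‖₊ : ℝ) := by
      rw [← ENNReal.tsum_coe_ne_top_iff_summable_coe]; exact ha.ne
    exact (by simpa [coe_nnnorm] using hs : Summable fun n => ‖f n a‖).of_norm
  have hsm : AEStronglyMeasurable (fun a => ∑' i, f i a) μ := by
    refine aestronglyMeasurable_of_tendsto_ae atTop
      (fun n => Finset.aestronglyMeasurable_sum (Finset.range n) (fun i _ => (hf i).1)) ?_
    filter_upwards [hae] with a ha using by simpa only [Finset.sum_apply] using ha.hasSum.tendsto_sum_nat
  refine ⟨hsm, ?_⟩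
  have hbound : ∀ᵐ a ∂μ, (‖∑' i, f i a‖₊ : ℝ≥0∞) ≤ ∑' i, (‖f i a‖₊ : ℝ≥0∞) := by
    filter_upwards [hae] with a ha
    have h2 : Summable fun n => ‖f n a‖₊ := by
      rw [← NNReal.summable_coe]
      simpa [coe_nnnorm, Real.norm_eq_abs] using ha.abs
    calc (‖∑' i, f i a‖₊ : ℝ≥0∞) ≤ (((∑' i, ‖f i a‖₊) : ℝ≥0) : ℝ≥0∞) :=
          ENNReal.coe_le_coe.2 (nnnorm_tsum_le h2)
      _ = ∑' i, (‖f i a‖₊ : ℝ≥0∞) := ENNReal.coe_tsum h2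
  show (∫⁻ a, ‖∑' i, f i a‖₊ ∂μ) < ∞
  calc ∫⁻ a, ‖∑' i, f i a‖₊ ∂μ ≤ ∫⁻ a, ∑' i, ‖f i a‖₊ ∂μ := lintegral_mono_ae hbound
    _ = ∑' i, ∫⁻ a, ‖f i a‖₊ ∂μ := lintegral_tsum hmeas
    _ < ⊤ := hlt.lt_top

end Aux

section Helpers
open Set

lemma aC_pos (j : ℕ) : 0 < aC j := by
  have : (0:ℝ) ≤ j := Nat.cast_nonneg j
  unfold aC; linarith

lemma sqrt_exp_integrable {c : ℝ} (hc : 0 < c) :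
    IntegrableOn (fun z => Real.sqrt z * Real.exp (-(c * z))) (Set.Ioi 0) := by
  have h := integrableOn_rpow_mul_exp_neg_mul_rpow (s := 1/2) (p := 1) (b := c)
    (by norm_num) one_pos hc
  refine h.congr_fun (fun x hx => ?_) measurableSet_Ioi
  beta_reduce
  rw [Real.rpow_one, Real.sqrt_eq_rpow, neg_mul]

lemma sqrt_exp_integral {c : ℝ} (hc : 0 < c) :
    ∫ z in Set.Ioi (0:ℝ), Real.sqrt z * Real.exp (-(c * z))
      = ((1/c) * Real.sqrt (1/c)) * (Real.sqrt π / 2) := by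
  have h := integral_rpow_mul_exp_neg_mul_Ioi (a := 3/2) (r := c) (by norm_num) hc
  have heq : ∫ z in Set.Ioi (0:ℝ), Real.sqrt z * Real.exp (-(c * z))
      = ∫ t in Set.Ioi (0:ℝ), t ^ ((3:ℝ)/2 - 1) * Real.exp (-(c * t)) := by
    refine setIntegral_congr_fun measurableSet_Ioi (fun x hx => ?_)
    rw [show (3:ℝ)/2 - 1 = 1/2 by norm_num, ← Real.sqrt_eq_rpow]
  rw [heq, h]
  have h32 : Real.Gamma (3/2) = Real.sqrt π / 2 := by
    have := Real.Gamma_add_one (s := 1/2) (by norm_num)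
    rw [show (1:ℝ)/2 + 1 = 3/2 by norm_num] at this
    rw [this, Real.Gamma_one_half_eq]; ring
  rw [h32]
  have : (1/c) ^ ((3:ℝ)/2) = (1/c) * Real.sqrt (1/c) := by
    rw [show (3:ℝ)/2 = 1 + 1/2 by norm_num, Real.rpow_add (by positivity), Real.rpow_one,
      Real.sqrt_eq_rpow]
  rw [this]

lemma G_integral' (e : ℝ) (j : ℕ) :
    ∫ z in Set.Ioi (0:ℝ),
      (Real.sqrt z / Real.sqrt π) * (e * aC j * Real.exp (-((aC j)^2/2) * z))
    = Real.sqrt 2 * (e / (aC j)^2) := by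
  have ha := aC_pos j
  have hc : 0 < (aC j)^2/2 := by positivity
  have h1 : ∀ z : ℝ, (Real.sqrt z / Real.sqrt π) * (e * aC j * Real.exp (-((aC j)^2/2) * z))
      = (e * aC j / Real.sqrt π) * (Real.sqrt z * Real.exp (-(((aC j)^2/2) * z))) := by
    intro z; rw [neg_mul]; ring
  simp_rw [h1]
  rw [MeasureTheory.integral_const_mul, sqrt_exp_integral hc]
  have h2 : (1:ℝ)/((aC j)^2/2) = 2/(aC j)^2 := by field_simp
  rw [h2, Real.sqrt_div (by norm_num : (0:ℝ) ≤ 2), Real.sqrt_sq ha.le]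
  have hπ : Real.sqrt π ≠ 0 := ne_of_gt (Real.sqrt_pos.mpr pi_pos)
  field_simp

lemma G_integrable (e : ℝ) (j : ℕ) :
    IntegrableOn (fun z =>
      (Real.sqrt z / Real.sqrt π) * (e * aC j * Real.exp (-((aC j)^2/2) * z)))
      (Set.Ioi 0) := by
  have ha := aC_pos j
  have hc : 0 < (aC j)^2/2 := by positivity
  have h : IntegrableOn (fun z => (e * aC j / Real.sqrt π) *
      (Real.sqrt z * Real.exp (-(((aC j)^2/2) * z)))) (Set.Ioi 0) :=
    (sqrt_exp_integrable hc).const_mul (e * aC j / Real.sqrt π)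
  refine h.congr_fun (fun z _ => ?_) measurableSet_Ioi
  rw [neg_mul]; ring

lemma G_norm_integral (j : ℕ) :
    ∫ z in Set.Ioi (0:ℝ),
      ‖(Real.sqrt z / Real.sqrt π) * (eta j * aC j * Real.exp (-((aC j)^2/2) * z))‖
    = Real.sqrt 2 * (|eta j| / (aC j)^2) := by
  have ha := aC_pos j
  rw [← G_integral' |eta j| j]
  refine setIntegral_congr_fun measurableSet_Ioi (fun z hz => ?_)
  have hz' : (0:ℝ) < z := hz
  rw [Real.norm_eq_abs, abs_mul, abs_of_nonneg (by positivity : (0:ℝ) ≤ Real.sqrt z / Real.sqrt π),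
    abs_mul, abs_mul, abs_of_pos ha, abs_of_pos (Real.exp_pos _)]

lemma eta_abs_le (j : ℕ) : |eta j| ≤ 1 := by
  have hch : (Nat.choose (2*j) j : ℝ) ≤ 4^j := by
    have h : Nat.choose (2*j) j ≤ 4^j := by
      calc Nat.choose (2*j) j ≤ ∑ m ∈ Finset.range (2*j+1), Nat.choose (2*j) m :=
            Finset.single_le_sum (fun i _ => Nat.zero_le _) (Finset.mem_range.mpr (by omega))
        _ = 2^(2*j) := Nat.sum_range_choose (2*j)
        _ = 4^j := by rw [pow_mul]; norm_num
    exact_mod_cast h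
  have habs : |eta j| = (Nat.choose (2*j) j : ℝ) / 4^j := by
    unfold eta
    rw [abs_div, abs_mul, abs_pow, abs_neg, abs_one, one_pow, one_mul, Nat.abs_cast,
      abs_pow]
    norm_num
  rw [habs, div_le_one (by positivity)]
  exact hch

lemma summable_main : Summable fun j : ℕ => |eta j| / (aC j)^2 := by
  have hS : Summable fun j : ℕ => 4/((j:ℝ)+1)^2 := by
    have h0 : Summable fun n : ℕ => 1/(n:ℝ)^2 := by
      exact_mod_cast Real.summable_one_div_nat_pow.mpr one_lt_two
    have h1 := (summable_nat_add_iff 1).mpr h0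
    have h2 := h1.mul_left 4
    refine h2.congr (fun n => ?_)
    push_cast
    ring
  refine Summable.of_nonneg_of_le (fun j => by positivity) (fun j => ?_) hS
  have ha := aC_pos j
  have h1 : |eta j| / (aC j)^2 ≤ 1/(aC j)^2 := by
    gcongr
    exact eta_abs_le j
  have h2 : 1/(aC j)^2 ≤ 4/((j:ℝ)+1)^2 := by
    rw [div_le_div_iff₀ (by positivity) (by positivity)]
    have hj : (0:ℝ) ≤ j := Nat.cast_nonneg j
    unfold aC
    nlinarith
  linarith


end Helpers

/-- Expectation computation after Theorem 6.1 of Franchi–Paruolo: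
`E(ζ⁽¹⁾) = ∫₀^∞ z f_ζ(z) dz = √2 Σ_j η_j a_j⁻²`, with the integral finite and
the series absolutely convergent. -/
theorem stmt15 :
    IntegrableOn
      (fun z => z * ((1 / Real.sqrt (π * z)) *
        ∑' j : ℕ, eta j * aC j * Real.exp (-((aC j) ^ 2 / 2) * z))) (Set.Ioi 0) ∧
    (Summable fun j : ℕ => |eta j| / (aC j) ^ 2) ∧
    ∫ z in Set.Ioi (0 : ℝ),
        z * ((1 / Real.sqrt (π * z)) *
          ∑' j : ℕ, eta j * aC j * Real.exp (-((aC j) ^ 2 / 2) * z)) =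
      Real.sqrt 2 * ∑' j : ℕ, eta j / (aC j) ^ 2 := by
  set G : ℕ → ℝ → ℝ := fun j z =>
    (Real.sqrt z / Real.sqrt π) * (eta j * aC j * Real.exp (-((aC j)^2/2) * z)) with hG
  have hGint : ∀ j, Integrable (G j) (volume.restrict (Set.Ioi 0)) :=
    fun j => G_integrable (eta j) j
  have hGnorm : Summable fun j => ∫ z, ‖G j z‖ ∂(volume.restrict (Set.Ioi 0)) := by
    refine ((summable_main.mul_left (Real.sqrt 2)).congr (fun j => ?_))
    exact (G_norm_integral j).symm
  have key : ∀ z ∈ Set.Ioi (0:ℝ),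
      z * ((1 / Real.sqrt (π * z)) *
        ∑' j : ℕ, eta j * aC j * Real.exp (-((aC j) ^ 2 / 2) * z)) = ∑' j, G j z := by
    intro z hz
    have hz' : (0:ℝ) < z := hz
    have hπ : Real.sqrt π ≠ 0 := ne_of_gt (Real.sqrt_pos.mpr pi_pos)
    have hzs : Real.sqrt z ≠ 0 := ne_of_gt (Real.sqrt_pos.mpr hz')
    have hz2 : Real.sqrt z * Real.sqrt z = z := Real.mul_self_sqrt hz'.le
    have hA : z * (1 / Real.sqrt (π * z)) = Real.sqrt z / Real.sqrt π := by
      rw [Real.sqrt_mul pi_pos.le, ← hz2]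
      rw [Real.sqrt_mul_self (Real.sqrt_nonneg z)]
      field_simp
    rw [hG]
    simp only []
    rw [tsum_mul_left, ← mul_assoc, hA]
  have hint : Integrable (fun z => ∑' j, G j z) (volume.restrict (Set.Ioi 0)) :=
    integrable_tsum_aux hGint hGnorm
  refine ⟨?_, summable_main, ?_⟩
  · exact hint.congr ((ae_restrict_iff' measurableSet_Ioi).mpr
      (Filter.Eventually.of_forall (fun z hz => (key z hz).symm)))
  · rw [setIntegral_congr_fun measurableSet_Ioi key]
    rw [← integral_tsum_of_summable_integral_norm hGint hGnorm]
    rw [tsum_congr (fun j => G_integral' (eta j) j)]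
    exact tsum_mul_left
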